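/- Let (M, d) be a metric space and A, B ⊆ M. For r ∈ [0,∞] let A^r = { m ∈ M | inf_{a∈A} d(a,m) ≤ r } denote the r-offset, and consider the families of offsets F_A(a) = A^a and F_B(a) = B^a for a ∈ [0,∞]. Define the interleaving distance d(F_A, F_B) = inf { r ∈ [0,∞] | for all a ∈ [0,∞], A^a ⊆ B^{a+r} and B^a ⊆ A^{a+r} }. Then the Hausdorff distance of A and B equals the interleaving distance of their offset families: d_H(A,B) = d(F_A, F_B), where d_H(A,B) = max( sup_{a∈A} inf_{b∈B} d(a,b), sup_{b∈B} inf_{a∈A} d(a,b) ). -/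

import Mathlib

open ENNReal

/-- The `r`-offset of a subset `A` of a metric space:
`A^r = { m | inf_{a ∈ A} d(a,m) ≤ r }`, distances valued in `[0,∞]`. -/
def offset {M : Type*} [MetricSpace M] (A : Set M) (r : ℝ≥0∞) : Set M :=
  {m : M | ⨅ a ∈ A, edist a m ≤ r}

/-- The Hausdorff distance
`d_H(A,B) = max( sup_{a∈A} inf_{b∈B} d(a,b), sup_{b∈B} inf_{a∈A} d(a,b) )`. -/
noncomputable def hausdorffDist {M : Type*} [MetricSpace M] (A B : Set M) : ℝ≥0∞ :=
  max (⨆ a ∈ A, ⨅ b ∈ B, edist a b) (⨆ b ∈ B, ⨅ a ∈ A, edist a b)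

/-- The interleaving distance of the offset families `F_A(a) = A^a` and
`F_B(a) = B^a`: the infimum of the `r` such that for all `a`,
`A^a ⊆ B^{a+r}` and `B^a ⊆ A^{a+r}`. -/
noncomputable def interleavingDistOffsets {M : Type*} [MetricSpace M] (A B : Set M) : ℝ≥0∞ :=
  sInf {r : ℝ≥0∞ | ∀ a : ℝ≥0∞, offset A a ⊆ offset B (a + r) ∧ offset B a ⊆ offset A (a + r)}


lemma offset_subset_offset {M : Type*} [MetricSpace M] {A B : Set M} {r : ℝ≥0∞}
    (h : ∀ a' ∈ A, ⨅ b ∈ B, edist b a' ≤ r) (s : ℝ≥0∞) :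
    offset A s ⊆ offset B (s + r) := by
  intro m hm
  simp only [offset, Set.mem_setOf_eq] at hm ⊢
  have key : ∀ a' ∈ A, ⨅ b ∈ B, edist b m ≤ r + edist a' m := by
    intro a' ha'
    calc ⨅ b ∈ B, edist b m ≤ ⨅ b ∈ B, (edist b a' + edist a' m) :=
          iInf₂_mono fun b _ => edist_triangle b a' m
      _ = (⨅ b ∈ B, edist b a') + edist a' m := by simp [iInf_add]
      _ ≤ r + edist a' m := add_le_add_left (h a' ha') _
  calc ⨅ b ∈ B, edist b m ≤ ⨅ a' ∈ A, (r + edist a' m) :=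
        le_iInf₂ fun a' ha' => key a' ha'
    _ = r + ⨅ a' ∈ A, edist a' m := by simp [add_iInf]
    _ ≤ r + s := add_le_add_right hm _
    _ = s + r := add_comm _ _

/-- The Hausdorff distance of `A` and `B` equals the interleaving distance of
their offset families. -/
theorem hausdorffDist_eq_interleavingDist {M : Type*} [MetricSpace M] (A B : Set M) :
    hausdorffDist A B = interleavingDistOffsets A B := by
  apply le_antisymm
  · refine le_sInf fun r hr => ?_
    rw [hausdorffDist, max_le_iff]
    constructor
    · refine iSup₂_le fun a ha => ?_
      have h : a ∈ offset B (0 + r) := (hr 0).1 (by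
        simp only [offset, Set.mem_setOf_eq]
        exact le_trans (iInf₂_le a ha) (by simp))
      simp only [offset, Set.mem_setOf_eq, zero_add] at h
      calc ⨅ b ∈ B, edist a b = ⨅ b ∈ B, edist b a := by simp [edist_comm]
        _ ≤ r := h
    · refine iSup₂_le fun b hb => ?_
      have h : b ∈ offset A (0 + r) := (hr 0).2 (by
        simp only [offset, Set.mem_setOf_eq]
        exact le_trans (iInf₂_le b hb) (by simp))
      simp only [offset, Set.mem_setOf_eq, zero_add] at h
      exact h
  · refine sInf_le fun s => ⟨?_, ?_⟩
    · refine offset_subset_offset (fun a' ha' => ?_) s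
      calc ⨅ b ∈ B, edist b a' = ⨅ b ∈ B, edist a' b := by simp [edist_comm]
        _ ≤ ⨆ a ∈ A, ⨅ b ∈ B, edist a b := le_iSup₂ (f := fun a _ => ⨅ b ∈ B, edist a b) a' ha'
        _ ≤ hausdorffDist A B := le_max_left _ _
    · refine offset_subset_offset (fun b' hb' => ?_) s
      calc ⨅ a ∈ A, edist a b' ≤ ⨆ b ∈ B, ⨅ a ∈ A, edist a b := le_iSup₂ (f := fun b _ => ⨅ a ∈ A, edist a b) b' hb'
        _ ≤ hausdorffDist A B := le_max_right _ _
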